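/- Under the gradient descent setup (step size 0 < η ≤ 1/(4(β+ρR)), initialization x₀ = −rb/‖b‖ with 0 ≤ r ≤ R_c), for every iteration t ≥ 0 and every eigenvector index i (writing w^{(i)} = v_iᵀw in an orthonormal eigenbasis (v_i) of A): x_t^{(i)} b^{(i)} ≤ 0, b^{(i)} s^{(i)} ≤ 0, and x_t^{(i)} s^{(i)} ≥ 0, where s is the global minimizer. Consequently x_tᵀb ≤ 0, x_tᵀs ≥ 0, and sᵀb ≤ 0. -/

import Mathlib

set_option maxHeartbeats 1000000

open scoped RealInnerProductSpace

noncomputable def Am {n : ℕ} (A : Matrix (Fin n) (Fin n) ℝ) :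
    EuclideanSpace ℝ (Fin n) →L[ℝ] EuclideanSpace ℝ (Fin n) :=
  Matrix.toEuclideanCLM (𝕜 := ℝ) A

/-- f(x) = (1/2)xᵀAx + bᵀx + (ρ/3)‖x‖³ -/
noncomputable def cubicF {n : ℕ} (A : Matrix (Fin n) (Fin n) ℝ)
    (b : EuclideanSpace ℝ (Fin n)) (ρ : ℝ) (x : EuclideanSpace ℝ (Fin n)) : ℝ :=
  (1/2) * ⟪x, Am A x⟫ + ⟪b, x⟫ + (ρ/3) * ‖x‖^3

/-- ∇f(x) = Ax + b + ρ‖x‖x -/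
noncomputable def gradF {n : ℕ} (A : Matrix (Fin n) (Fin n) ℝ)
    (b : EuclideanSpace ℝ (Fin n)) (ρ : ℝ) (x : EuclideanSpace ℝ (Fin n)) :
    EuclideanSpace ℝ (Fin n) := Am A x + b + (ρ * ‖x‖) • x

theorem stmt9 {n : ℕ} (A : Matrix (Fin n) (Fin n) ℝ) (hA : A.IsSymm)
    (b : EuclideanSpace ℝ (Fin n)) (hb : b ≠ 0) (ρ : ℝ) (hρ : 0 < ρ)
    (β : ℝ) (hβ : β = ‖Am A‖) (R Rc : ℝ)
    (hR : R = β/(2*ρ) + Real.sqrt ((β/(2*ρ))^2 + ‖b‖/ρ))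
    (hRc : Rc = -(⟪b, Am A b⟫/(2*ρ*‖b‖^2))
        + Real.sqrt ((⟪b, Am A b⟫/(2*ρ*‖b‖^2))^2 + ‖b‖/ρ))
    (η : ℝ) (hη : 0 < η) (hη2 : η ≤ 1/(4*(β + ρ*R)))
    (r : ℝ) (hr0 : 0 ≤ r) (hrRc : r ≤ Rc)
    (x : ℕ → EuclideanSpace ℝ (Fin n))
    (hx0 : x 0 = -(r/‖b‖) • b)
    (hstep : ∀ t, x (t+1) = x t - η • gradF A b ρ (x t))
    (v : OrthonormalBasis (Fin n) ℝ (EuclideanSpace ℝ (Fin n)))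
    (μ : Fin n → ℝ) (heig : ∀ i, Am A (v i) = μ i • v i)
    (s : EuclideanSpace ℝ (Fin n))
    (hs1 : Am A s + (ρ * ‖s‖) • s + b = 0)
    (hs2 : ∀ y : EuclideanSpace ℝ (Fin n), 0 ≤ ⟪y, Am A y + (ρ * ‖s‖) • y⟫)
    (hbound : ∀ t, ‖x t‖ ≤ R) :
    (∀ t : ℕ, ∀ i : Fin n,
      ⟪v i, x t⟫ * ⟪v i, b⟫ ≤ 0 ∧ ⟪v i, b⟫ * ⟪v i, s⟫ ≤ 0 ∧
      ⟪v i, x t⟫ * ⟪v i, s⟫ ≥ 0) ∧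
    (∀ t : ℕ, ⟪x t, b⟫ ≤ 0 ∧ ⟪x t, s⟫ ≥ 0) ∧ ⟪s, b⟫ ≤ 0 := by
  -- self-adjointness
  have hherm : A.IsHermitian := by
    simpa [Matrix.IsHermitian] using hA.eq
  have hsym : ∀ w y : EuclideanSpace ℝ (Fin n), ⟪Am A w, y⟫ = ⟪w, Am A y⟫ := by
    intro w y
    have h := (Matrix.isHermitian_iff_isSymmetric.mp hherm) w y
    exact h
  have hcoord : ∀ (i : Fin n) (w : EuclideanSpace ℝ (Fin n)),
      ⟪v i, Am A w⟫ = μ i * ⟪v i, w⟫ := by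
    intro i w
    rw [← hsym, heig i, inner_smul_left]
    simp
  have hvnorm : ∀ i, ⟪v i, v i⟫ = (1:ℝ) := fun i => by
    have := v.orthonormal.1 i
    rw [real_inner_self_eq_norm_sq, this]; ring
  -- |μ i| ≤ β
  have hμβ : ∀ i, |μ i| ≤ β := by
    intro i
    have h1 : ‖Am A (v i)‖ ≤ ‖Am A‖ * ‖v i‖ := (Am A).le_opNorm (v i)
    rw [heig i, norm_smul, v.orthonormal.1 i, mul_one, mul_one, Real.norm_eq_abs] at h1
    rw [hβ]; exact h1
  -- R > 0
  have hbpos : (0:ℝ) < ‖b‖ := norm_pos_iff.mpr hb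
  have hβ0 : 0 ≤ β := hβ ▸ norm_nonneg _
  have hRpos : 0 < R := by
    have hd : (0:ℝ) < ‖b‖/ρ := div_pos hbpos hρ
    have h1 : (0:ℝ) < Real.sqrt ((β/(2*ρ))^2 + ‖b‖/ρ) := by
      apply Real.sqrt_pos.mpr
      nlinarith [sq_nonneg (β/(2*ρ))]
    have h2 : 0 ≤ β/(2*ρ) := div_nonneg hβ0 (by linarith)
    rw [hR]; linarith
  -- μ i + ρ‖s‖ ≥ 0
  have hμs : ∀ i, 0 ≤ μ i + ρ * ‖s‖ := by
    intro i
    have h := hs2 (v i)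
    rw [inner_add_right, hcoord, inner_smul_right, hvnorm] at h
    linarith [h]
  -- eigen equation for s
  have hseq : ∀ i, (μ i + ρ * ‖s‖) * ⟪v i, s⟫ = -⟪v i, b⟫ := by
    intro i
    have h := congrArg (fun w => ⟪v i, w⟫) hs1
    simp only [inner_add_right, inner_zero_right, hcoord, inner_smul_right] at h
    linarith [h]
  -- b_i s_i ≤ 0
  have hbs : ∀ i, ⟪v i, b⟫ * ⟪v i, s⟫ ≤ 0 := by
    intro i
    have hb' : ⟪v i, b⟫ = -((μ i + ρ * ‖s‖) * ⟪v i, s⟫) := by linarith [hseq i]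
    rw [hb']
    nlinarith [mul_nonneg (hμs i) (mul_self_nonneg (⟪v i, s⟫ : ℝ))]
  -- recursion in coordinates
  have hrec : ∀ t i, ⟪v i, x (t+1)⟫ =
      (1 - η * (μ i + ρ * ‖x t‖)) * ⟪v i, x t⟫ - η * ⟪v i, b⟫ := by
    intro t i
    rw [hstep t]
    simp only [gradF, inner_sub_right, inner_smul_right, inner_add_right, hcoord,
      inner_smul_right]
    ring
  -- coefficient nonneg
  have hcoef : ∀ t i, 0 ≤ 1 - η * (μ i + ρ * ‖x t‖) := by
    intro t i
    have h1 : μ i + ρ * ‖x t‖ ≤ β + ρ * R := by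
      have := hμβ i
      have := hbound t
      have hx0' : 0 ≤ ‖x t‖ := norm_nonneg _
      nlinarith [abs_le.mp (hμβ i)]
    have hden : 0 < β + ρ * R := by nlinarith
    have h2 : η * (μ i + ρ * ‖x t‖) ≤ η * (β + ρ * R) := by nlinarith
    have h3 : η * (β + ρ * R) ≤ 1/4 := by
      have h4 := hη2
      rw [le_div_iff₀ (by linarith : (0:ℝ) < 4*(β + ρ * R))] at h4
      nlinarith
    linarith
  -- main induction
  have hmain : ∀ t i, ⟪v i, x t⟫ * ⟪v i, b⟫ ≤ 0 ∧ ⟪v i, x t⟫ * ⟪v i, s⟫ ≥ 0 := by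
    intro t
    induction t with
    | zero =>
      intro i
      rw [hx0]
      simp only [inner_smul_right]
      constructor
      · have h5 : (0:ℝ) ≤ r/‖b‖ := div_nonneg hr0 hbpos.le
        nlinarith [mul_self_nonneg (⟪v i, b⟫ : ℝ)]
      · have h5 : (0:ℝ) ≤ r/‖b‖ := div_nonneg hr0 hbpos.le
        nlinarith [hbs i]
    | succ t ih =>
      intro i
      obtain ⟨h1, h2⟩ := ih i
      rw [hrec t i]
      constructor
      · nlinarith [hcoef t i, sq_nonneg (⟪v i, b⟫ : ℝ)]
      · nlinarith [hcoef t i, hbs i]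
  refine ⟨fun t i => ⟨(hmain t i).1, hbs i, (hmain t i).2⟩, ?_, ?_⟩
  · intro t
    constructor
    · rw [← v.sum_inner_mul_inner (x t) b]
      apply Finset.sum_nonpos
      intro i _
      rw [real_inner_comm (v i) (x t)]
      exact (hmain t i).1
    · rw [← v.sum_inner_mul_inner (x t) s]
      apply Finset.sum_nonneg
      intro i _
      rw [real_inner_comm (v i) (x t)]
      exact (hmain t i).2
  · rw [← v.sum_inner_mul_inner s b]
    apply Finset.sum_nonpos
    intro i _
    rw [real_inner_comm (v i) s]
    have := hbs i
    nlinarith [hbs i]
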